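/- For every countable ordinal α, the lexicographic power 2^α contains no order-embedded copy of ω₁ and no order-embedded copy of ω₁ reversed; consequently the same holds for [-1,1]^α, which therefore has countable character. -/

import Mathlib

open Ordinal Set Cardinal

universe u v

namespace Stmt9Aux

abbrev W : Type v := (omega.{v} 1).ToType

noncomputable instance : IsWellOrder W.{v} ((· < ·) : _ → _ → Prop) := isWellOrder_lt

noncomputable instance {S : Set W.{v}} : IsWellOrder S ((· < ·) : _ → _ → Prop) := isWellOrder_lt

theorem not_countable_univ : ¬(Set.univ : Set W.{v}).Countable := by
  rw [Cardinal.countable_iff_lt_aleph_one, Cardinal.mk_univ, Cardinal.mk_toType,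
    Ordinal.card_omega]
  exact lt_irrefl _

theorem countable_Iio (ξ : W.{v}) : (Set.Iio ξ).Countable := by
  rw [Cardinal.countable_iff_lt_aleph_one]
  have h1 : typein (α := W.{v}) (· < ·) ξ < omega.{v} 1 := by
    conv_rhs => rw [← type_toType (omega.{v} 1)]
    exact typein_lt_type _ ξ
  have h3 : typein (α := W.{v}) (· < ·) ξ < (Cardinal.aleph.{v} 1).ord := by
    rw [Cardinal.ord_aleph]; exact h1
  have h4 := Cardinal.lt_ord.1 h3
  convert h4 using 1
  rw [Ordinal.card_typein]; rfl

theorem exists_succ (ξ : W.{v}) : ∃ η, ξ < η ∧ ∀ ζ, ξ < ζ → η ≤ ζ := by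
  have hne : {η | ξ < η}.Nonempty := by
    by_contra h
    rw [Set.not_nonempty_iff_eq_empty] at h
    apply not_countable_univ
    have hsub : (Set.univ : Set W.{v}) ⊆ insert ξ (Set.Iio ξ) := by
      intro x _
      rcases lt_trichotomy x ξ with h'|h'|h'
      · exact Or.inr h'
      · exact Or.inl h'
      · rw [Set.eq_empty_iff_forall_notMem] at h
        exact absurd h' (h x)
    exact Set.Countable.mono hsub ((countable_Iio ξ).insert ξ)
  refine ⟨wellFounded_lt.min _ hne, wellFounded_lt.min_mem _ hne, fun ζ hζ => ?_⟩
  exact le_of_not_gt (wellFounded_lt.not_lt_min _ hζ)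

theorem embeds_of_not_countable {S : Set W.{v}} (hS : ¬S.Countable) :
    ∃ h : W.{v} → S, StrictMono h := by
  have h1 : Cardinal.aleph 1 ≤ #S := by
    rw [Cardinal.countable_iff_lt_aleph_one, not_lt] at hS
    exact hS
  have h2 : omega.{v} 1 ≤ type ((·<·) : S → S → Prop) := by
    have h3 : (Cardinal.aleph.{v} 1).ord ≤ type ((·<·) : S → S → Prop) :=
      Cardinal.ord_le.2 (by rwa [Ordinal.card_type])
    rwa [Cardinal.ord_aleph] at h3
  conv_lhs at h2 => rw [← type_toType (omega.{v} 1)]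
  obtain ⟨f⟩ := Ordinal.type_le_iff'.1 h2
  exact ⟨fun x => f x, fun a b h => f.map_rel_iff.2 h⟩

theorem exists_big_fiber {ι : Type u} [Countable ι] (d : W.{v} → ι) :
    ∃ β, ¬(d ⁻¹' {β}).Countable := by
  by_contra h
  push_neg at h
  apply not_countable_univ
  have huniv : (Set.univ : Set W.{v}) = ⋃ β, d ⁻¹' {β} := by
    ext x; simp
  rw [huniv]
  exact Set.countable_iUnion fun β => h β


theorem lexBool : ∀ (o : Ordinal.{u}) (ι : Type u) [LinearOrder ι] [WellFoundedLT ι] [Countable ι],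
    type ((·<·) : ι → ι → Prop) = o → ∀ g : W.{v} → Lex (ι → Bool), ¬ StrictMono g := by
  intro o
  induction o using Ordinal.induction with
  | h o IH =>
    intro ι _ _ _ hty g hg
    choose s hs hsle using exists_succ.{v}
    have hlt : ∀ ξ, ∃ i, (∀ j, j < i → ofLex (g ξ) j = ofLex (g (s ξ)) j) ∧
        ofLex (g ξ) i = false ∧ ofLex (g (s ξ)) i = true := by
      intro ξ
      obtain ⟨i, h1, h2⟩ := hg (hs ξ)
      exact ⟨i, h1, Bool.lt_iff.1 h2⟩
    choose d hd1 hd2 hd3 using hlt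
    obtain ⟨β, hβ⟩ := exists_big_fiber d
    obtain ⟨h, hmono⟩ := embeds_of_not_countable hβ
    have key : StrictMono (fun ξ : W.{v} =>
        toLex (fun j : (Set.Iio β) => ofLex (g ((h ξ) : W.{v})) j.1)) := by
      intro ξ η hξη
      have hab : ((h ξ : W.{v})) < (h η : W.{v}) := hmono hξη
      have da : d (h ξ) = β := (h ξ).2
      have db : d (h η) = β := (h η).2
      obtain ⟨i₀, heq, hi⟩ := hg hab
      have hi₀β : i₀ < β := by
        by_contra hcon
        rcases (not_lt.1 hcon).lt_or_eq with hlt' | heqβ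
        · -- β < i₀
          have h1 : g (s (h ξ)) ≤ g (h η) := (hg.monotone) (hsle _ _ hab)
          have h2 : g (h η) < g (s (h ξ)) := by
            refine ⟨β, fun j hj => ?_, ?_⟩
            · rw [← heq j (hj.trans hlt')]
              have hj' : j < d ((h ξ) : W.{v}) := by rw [da]; exact hj
              exact hd1 _ j hj'
            · show ofLex (g ((h η) : W.{v})) β < ofLex (g (s ((h ξ) : W.{v}))) β
              have t1 : ofLex (g ((h ξ) : W.{v})) β = false := by
                have t := hd2 (h ξ); rw [da] at t; exact t
              have e1 : ofLex (g ((h η) : W.{v})) β = false :=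
                ((heq β hlt').symm).trans t1
              have e2 : ofLex (g (s ((h ξ) : W.{v}))) β = true := by
                have t := hd3 (h ξ); rw [da] at t; exact t
              rw [e1, e2]; exact Bool.lt_iff.2 ⟨rfl, rfl⟩
          exact absurd h1 (not_le_of_gt h2)
        · -- i₀ = β
          have e1 : ofLex (g (h η)) i₀ = true := (Bool.lt_iff.1 hi).2
          have e2 : ofLex (g ((h η) : W.{v})) i₀ = false := by
            have t := hd2 (h η); rw [db] at t; rw [← heqβ]; exact t
          rw [e1] at e2; exact Bool.noConfusion e2
      refine ⟨⟨i₀, hi₀β⟩, fun j hj => heq j.1 hj, hi⟩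
    have htylt : type ((·<·) : (Set.Iio β) → _ → Prop) < o := by
      haveI : IsWellOrder ι (· < ·) := isWellOrder_lt
      rw [← hty]
      have : type ((·<·) : (Set.Iio β) → _ → Prop) = typein ((·<·) : ι → ι → Prop) β :=
        type_subrel ((·<·) : ι → ι → Prop) β
      rw [this]
      exact typein_lt_type _ β
    exact IH _ htylt (Set.Iio β) rfl _ key

theorem lexBool' (ι : Type u) [LinearOrder ι] [WellFoundedLT ι] [Countable ι]
    (g : W.{v} → Lex (ι → Bool)) : ¬ StrictMono g :=
  lexBool _ ι rfl g

theorem lexBoolDual (ι : Type u) [LinearOrder ι] [WellFoundedLT ι] [Countable ι]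
    (f : (W.{v})ᵒᵈ → Lex (ι → Bool)) (hf : StrictMono f) : False := by
  have key : StrictMono (fun ξ : W.{v} =>
      toLex (fun i : ι => !(ofLex (f (OrderDual.toDual ξ)) i))) := by
    intro a b hab
    have hba : f (OrderDual.toDual b) < f (OrderDual.toDual a) :=
      hf (show OrderDual.toDual b < OrderDual.toDual a from hab)
    obtain ⟨i, heq, hi⟩ := hba
    obtain ⟨e1, e2⟩ := Bool.lt_iff.1 hi
    refine ⟨i, fun j hj => congrArg (!·) (heq j hj).symm, ?_⟩
    show (!(ofLex (f (OrderDual.toDual a)) i)) < (!(ofLex (f (OrderDual.toDual b)) i))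
    have e1' : ofLex (f (OrderDual.toDual b)) i = false := e1
    have e2' : ofLex (f (OrderDual.toDual a)) i = true := e2
    rw [e1', e2']
    exact Bool.lt_iff.2 ⟨rfl, rfl⟩
  exact lexBool' ι _ key

theorem real_strictMono : ∃ e : ℝ → Lex (ℕ → Bool), StrictMono e := by
  classical
  set q := (Denumerable.eqv ℚ) with hq
  refine ⟨fun x => toLex (fun n => decide (((q.symm n : ℚ) : ℝ) < x)), ?_⟩
  intro x y hxy
  obtain ⟨r, hr1, hr2⟩ := exists_rat_btwn hxy
  have hD : ∃ n, decide (((q.symm n : ℚ) : ℝ) < x) ≠ decide (((q.symm n : ℚ) : ℝ) < y) := by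
    refine ⟨q r, ?_⟩
    rw [q.symm_apply_apply]
    have d1 : decide ((r : ℝ) < x) = false := by simp [not_lt.2 hr1.le]
    have d2 : decide ((r : ℝ) < y) = true := by simp [hr2]
    rw [d1, d2]; simp
  have hmem := Nat.find_spec hD
  have hmin : ∀ m, m < Nat.find hD →
      decide (((q.symm m : ℚ) : ℝ) < x) = decide (((q.symm m : ℚ) : ℝ) < y) :=
    fun m hm => not_ne_iff.1 (Nat.find_min hD hm)
  refine ⟨Nat.find hD, fun j hj => hmin j hj, ?_⟩
  show decide (((q.symm (Nat.find hD) : ℚ) : ℝ) < x) < decide (((q.symm (Nat.find hD) : ℚ) : ℝ) < y)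
  rcases Classical.em (((q.symm (Nat.find hD) : ℚ) : ℝ) < x) with hx | hx
  · have d1 : decide (((q.symm (Nat.find hD) : ℚ) : ℝ) < x) = true := by
      rw [decide_eq_true_eq]; exact hx
    have d2 : decide (((q.symm (Nat.find hD) : ℚ) : ℝ) < y) = true := by
      rw [decide_eq_true_eq]; exact hx.trans hxy
    exact absurd (d1.trans d2.symm) hmem
  · rcases Classical.em (((q.symm (Nat.find hD) : ℚ) : ℝ) < y) with hy | hy
    · have d1 : decide (((q.symm (Nat.find hD) : ℚ) : ℝ) < x) = false := by
        rw [decide_eq_false_iff_not]; exact hx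
      have d2 : decide (((q.symm (Nat.find hD) : ℚ) : ℝ) < y) = true := by
        rw [decide_eq_true_eq]; exact hy
      rw [d1, d2]; exact Bool.lt_iff.2 ⟨rfl, rfl⟩
    · have d1 : decide (((q.symm (Nat.find hD) : ℚ) : ℝ) < x) = false := by
        rw [decide_eq_false_iff_not]; exact hx
      have d2 : decide (((q.symm (Nat.find hD) : ℚ) : ℝ) < y) = false := by
        rw [decide_eq_false_iff_not]; exact hy
      exact absurd (d1.trans d2.symm) hmem

theorem icc_emb {ι : Type u} [LinearOrder ι] :
    ∃ F : Lex (ι → Set.Icc (-1:ℝ) 1) → Lex ((ι ×ₗ ℕ) → Bool), StrictMono F := by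
  obtain ⟨e, he⟩ := real_strictMono
  refine ⟨fun f => toLex (fun p : ι ×ₗ ℕ =>
    ofLex (e ((ofLex f (ofLex p).1 : Set.Icc (-1:ℝ) 1) : ℝ)) (ofLex p).2), ?_⟩
  intro f g hfg
  obtain ⟨a, heqa, ha⟩ := hfg
  have ha' : ((ofLex f a : Set.Icc (-1:ℝ) 1) : ℝ) < ((ofLex g a : Set.Icc (-1:ℝ) 1) : ℝ) := ha
  obtain ⟨n, heqn, hn⟩ := he ha'
  refine ⟨toLex (a, n), ?_, hn⟩
  intro p hp
  rcases (Prod.Lex.lt_iff (x := p) (y := toLex (a, n))).1 hp with h1 | ⟨h1, h2⟩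
  · exact congrArg (fun t : Set.Icc (-1:ℝ) 1 => ofLex (e (t : ℝ)) (ofLex p).2)
      (heqa (ofLex p).1 h1)
  · show ofLex (e ((ofLex f (ofLex p).1 : Set.Icc (-1:ℝ) 1) : ℝ)) (ofLex p).2
        = ofLex (e ((ofLex g (ofLex p).1 : Set.Icc (-1:ℝ) 1) : ℝ)) (ofLex p).2
    rw [show (ofLex p).1 = a from h1]
    exact heqn (ofLex p).2 h2

theorem exists_cofinal {L : Type w} [LinearOrder L]
    (hL : ∀ g : W.{v} → L, ¬ StrictMono g) (l : L) :
    ∃ A : Set L, A.Countable ∧ (∀ a ∈ A, a < l) ∧ ∀ x, x < l → ∃ a ∈ A, x ≤ a := by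
  by_contra hcon
  push_neg at hcon
  have hbnd : ∀ A : Set L, ∃ x, A.Countable → (∀ a ∈ A, a < l) →
      (x < l ∧ ∀ a ∈ A, a < x) := by
    intro A
    by_cases h1 : A.Countable ∧ ∀ a ∈ A, a < l
    · obtain ⟨x, hx1, hx2⟩ := hcon A h1.1 h1.2
      exact ⟨x, fun _ _ => ⟨hx1, hx2⟩⟩
    · exact ⟨l, fun hc hlt => absurd ⟨hc, hlt⟩ h1⟩
  choose bnd hbnd using hbnd
  set g : W.{v} → L := wellFounded_lt.fix
    (fun ξ rec => bnd { z | ∃ η, ∃ hη : η < ξ, rec η hη = z }) with hgdef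
  have geq : ∀ ξ, g ξ = bnd (g '' Set.Iio ξ) := by
    intro ξ
    rw [hgdef]
    rw [WellFounded.fix_eq]
    congr 1
    ext z
    constructor
    · rintro ⟨η, hη, rfl⟩; exact ⟨η, hη, rfl⟩
    · rintro ⟨η, hη, rfl⟩; exact ⟨η, hη, rfl⟩
  have inv : ∀ ξ : W.{v}, g ξ < l ∧ ∀ η, η < ξ → g η < g ξ := by
    intro ξ0
    refine wellFounded_lt.induction
      (C := fun ξ => g ξ < l ∧ ∀ η, η < ξ → g η < g ξ) ξ0 ?_
    intro ξ IH
    · have hc : (g '' Set.Iio ξ).Countable := (countable_Iio ξ).image g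
      have hltl : ∀ a ∈ g '' Set.Iio ξ, a < l := by
        rintro a ⟨η, hη, rfl⟩; exact (IH η hη).1
      obtain ⟨h1, h2⟩ := hbnd (g '' Set.Iio ξ) hc hltl
      rw [← geq ξ] at h1 h2
      exact ⟨h1, fun η hη => h2 _ ⟨η, hη, rfl⟩⟩
  exact hL g (fun a b hab => (inv b).2 a hab)

end Stmt9Aux

/-- `L` has countable character. -/
def CharLEOmega (L : Type*) [LinearOrder L] : Prop :=
  ∀ l : L, ∃ A B : Set L, A.Countable ∧ B.Countable ∧
    (∀ a ∈ A, ∀ b ∈ B, a < b) ∧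
    {x | (∀ a ∈ A, a < x) ∧ (∀ b ∈ B, x < b)} = {l}

theorem stmt9 (α : Ordinal) (hα : α.card ≤ Cardinal.aleph0) :
    IsEmpty ((ω_ 1).ToType ↪o Lex (α.ToType → Bool)) ∧
    IsEmpty (((ω_ 1).ToType)ᵒᵈ ↪o Lex (α.ToType → Bool)) ∧
    IsEmpty ((ω_ 1).ToType ↪o Lex (α.ToType → Set.Icc (-1 : ℝ) 1)) ∧
    IsEmpty (((ω_ 1).ToType)ᵒᵈ ↪o Lex (α.ToType → Set.Icc (-1 : ℝ) 1)) ∧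
    CharLEOmega (Lex (α.ToType → Set.Icc (-1 : ℝ) 1)) := by
  haveI hcnt : Countable α.ToType :=
    Cardinal.mk_le_aleph0_iff.1 (by rw [Cardinal.mk_toType]; exact hα)
  haveI : Countable (α.ToType ×ₗ ℕ) := inferInstanceAs (Countable (α.ToType × ℕ))
  obtain ⟨F, hF⟩ := Stmt9Aux.icc_emb (ι := α.ToType)
  refine ⟨⟨fun f => Stmt9Aux.lexBool' _ f f.strictMono⟩,
    ⟨fun f => Stmt9Aux.lexBoolDual _ f f.strictMono⟩,
    ⟨fun f => Stmt9Aux.lexBool' _ (fun ξ => F (f ξ))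
      (fun a b hab => hF (f.strictMono hab))⟩,
    ⟨fun f => Stmt9Aux.lexBoolDual _ (fun ξ => F (f ξ))
      (fun a b hab => hF (f.strictMono hab))⟩,
    ?_⟩
  intro l
  have hL : ∀ g : Stmt9Aux.W.{0} → Lex (α.ToType → Set.Icc (-1 : ℝ) 1), ¬ StrictMono g :=
    fun g hg => Stmt9Aux.lexBool' _ (fun ξ => F (g ξ)) (fun a b hab => hF (hg hab))
  have hL' : ∀ g : Stmt9Aux.W.{0} → (Lex (α.ToType → Set.Icc (-1 : ℝ) 1))ᵒᵈ,
      ¬ StrictMono g := by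
    intro g hg
    have key : StrictMono (fun ξ : (Stmt9Aux.W.{0})ᵒᵈ => F (g (OrderDual.ofDual ξ))) := by
      intro a b hab
      exact hF (hg (show OrderDual.ofDual b < OrderDual.ofDual a from hab))
    exact Stmt9Aux.lexBoolDual _ _ key
  obtain ⟨A, hAc, hAl, hAcof⟩ := Stmt9Aux.exists_cofinal hL l
  obtain ⟨B', hBc, hBl, hBcof⟩ := Stmt9Aux.exists_cofinal hL' (OrderDual.toDual l)
  refine ⟨A, {x : Lex (α.ToType → Set.Icc (-1 : ℝ) 1) | OrderDual.toDual x ∈ B'},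
    hAc, hBc, ?_, ?_⟩
  · intro a ha b hb
    exact lt_trans (hAl a ha) (hBl _ hb)
  · ext x
    simp only [Set.mem_setOf_eq, Set.mem_singleton_iff]
    constructor
    · rintro ⟨h1, h2⟩
      rcases lt_trichotomy x l with hx | hx | hx
      · obtain ⟨a, ha, hxa⟩ := hAcof x hx
        exact absurd (lt_of_lt_of_le (h1 a ha) hxa) (lt_irrefl a)
      · exact hx
      · obtain ⟨b, hb, hxb⟩ := hBcof (OrderDual.toDual x) hx
        exact absurd (lt_of_lt_of_le (h2 _ hb) hxb) (lt_irrefl x)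
    · rintro rfl
      exact ⟨fun a ha => hAl a ha, fun b hb => hBl b hb⟩
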